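/- arXiv:1602.04688 — 3 statements merged into one kernel-verified Lean document; each statement's English description precedes it below -/
import Mathlib

section
/- Let (χ_{D₁ᵏ}, χ_{D₂ᵏ}) ∈ B, and define φ₁ = (1/√δt)·G_{δt} * (γ_LV χ_{D₂ᵏ} + γ_SL χ_{D₃}) and φ₂ = (1/√δt)·G_{δt} * (γ_LV χ_{D₁ᵏ} + γ_SV χ_{D₃}), together with the linearized functional L̂(u₁,u₂) = ∫_{ℝⁿ} u₁ φ₁ dx + ∫_{ℝⁿ} u₂ φ₂ dx. Suppose δ ∈ ℝ is such that the set D₁^{k+1} := {x ∈ Ω : φ₁(x) < φ₂(x) + δ} has measure V₀, and set D₂^{k+1} = Ω \ D₁^{k+1}. Then (χ_{D₁^{k+1}}, χ_{D₂^{k+1}}) minimizes L̂ over K: for every (u₁,u₂) ∈ K, L̂(χ_{D₁^{k+1}}, χ_{D₂^{k+1}}) ≤ L̂(u₁,u₂). -/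
open MeasureTheory Real Set

/-- The Gaussian (heat) kernel `G_t(x) = (4πt)^{-n/2} exp(-|x|²/(4t))` on `ℝⁿ`. -/
noncomputable def gauss (n : ℕ) (t : ℝ) (x : EuclideanSpace ℝ (Fin n)) : ℝ :=
  (4 * Real.pi * t) ^ (-(n : ℝ) / 2) * Real.exp (-‖x‖ ^ 2 / (4 * t))

/-- Convolution with the Gaussian kernel: `(G_t * f)(x) = ∫ G_t(x - y) f(y) dy`. -/
noncomputable def gconv (n : ℕ) (t : ℝ) (f : EuclideanSpace ℝ (Fin n) → ℝ)
    (x : EuclideanSpace ℝ (Fin n)) : ℝ :=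
  ∫ y, gauss n t (x - y) * f y

/-- The indicator function `χ_A` of a set `A ⊆ ℝⁿ`. -/
noncomputable def chi (n : ℕ) (A : Set (EuclideanSpace ℝ (Fin n))) :
    EuclideanSpace ℝ (Fin n) → ℝ :=
  Set.indicator A fun _ => (1 : ℝ)

/-- The approximate interfacial energy
`E^{δt}(u₁,u₂) = (1/√δt)[γ_LV ∫ u₁ (G_{δt}*u₂) + γ_SL ∫ u₁ (G_{δt}*χ_{D₃})
  + γ_SV ∫ u₂ (G_{δt}*χ_{D₃})]`. -/
noncomputable def Efun (n : ℕ) (δt γLV γSL γSV : ℝ) (D₃ : Set (EuclideanSpace ℝ (Fin n)))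
    (u₁ u₂ : EuclideanSpace ℝ (Fin n) → ℝ) : ℝ :=
  (1 / Real.sqrt δt) *
    (γLV * (∫ x, u₁ x * gconv n δt u₂ x)
      + γSL * (∫ x, u₁ x * gconv n δt (chi n D₃) x)
      + γSV * ∫ x, u₂ x * gconv n δt (chi n D₃) x)

/-- The convex relaxed admissible set `K`: measurable pairs with `0 ≤ u₁,u₂ ≤ 1`,
`u₁ + u₂ = χ_Ω` a.e., and `∫ u₁ = V₀`. -/
def Kset (n : ℕ) (Ω : Set (EuclideanSpace ℝ (Fin n))) (V₀ : ℝ) :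
    Set ((EuclideanSpace ℝ (Fin n) → ℝ) × (EuclideanSpace ℝ (Fin n) → ℝ)) :=
  {p | Measurable p.1 ∧ Measurable p.2 ∧
    (∀ᵐ x ∂(volume : Measure (EuclideanSpace ℝ (Fin n))),
      0 ≤ p.1 x ∧ p.1 x ≤ 1 ∧ 0 ≤ p.2 x ∧ p.2 x ≤ 1 ∧ p.1 x + p.2 x = chi n Ω x) ∧
    (∫ x, p.1 x) = V₀}

/-- The admissible set `B`: measurable pairs of `{0,1}`-valued functions with
`u₁ + u₂ = χ_Ω` a.e. and `∫ u₁ = V₀`. -/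
def Bset (n : ℕ) (Ω : Set (EuclideanSpace ℝ (Fin n))) (V₀ : ℝ) :
    Set ((EuclideanSpace ℝ (Fin n) → ℝ) × (EuclideanSpace ℝ (Fin n) → ℝ)) :=
  {p | Measurable p.1 ∧ Measurable p.2 ∧
    (∀ᵐ x ∂(volume : Measure (EuclideanSpace ℝ (Fin n))),
      (p.1 x = 0 ∨ p.1 x = 1) ∧ (p.2 x = 0 ∨ p.2 x = 1) ∧ p.1 x + p.2 x = chi n Ω x) ∧
    (∫ x, p.1 x) = V₀}
section Aux

lemma chi_nonneg (n : ℕ) (A : Set (EuclideanSpace ℝ (Fin n))) (x : EuclideanSpace ℝ (Fin n)) :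
    0 ≤ chi n A x := by
  unfold chi; by_cases hx : x ∈ A <;> simp [hx]

lemma chi_le_one (n : ℕ) (A : Set (EuclideanSpace ℝ (Fin n))) (x : EuclideanSpace ℝ (Fin n)) :
    chi n A x ≤ 1 := by
  unfold chi; by_cases hx : x ∈ A <;> simp [hx]

lemma chi_mono (n : ℕ) {A B : Set (EuclideanSpace ℝ (Fin n))} (hAB : A ⊆ B)
    (x : EuclideanSpace ℝ (Fin n)) : chi n A x ≤ chi n B x := by
  unfold chi
  by_cases hx : x ∈ A
  · simp [hx, hAB hx]
  · have h := chi_nonneg n B x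
    unfold chi at h
    simpa [hx] using h

lemma chi_measurable (n : ℕ) {A : Set (EuclideanSpace ℝ (Fin n))} (hA : MeasurableSet A) :
    Measurable (chi n A) :=
  measurable_const.indicator hA

lemma chi_diff (n : ℕ) {A B : Set (EuclideanSpace ℝ (Fin n))} (hAB : A ⊆ B)
    (x : EuclideanSpace ℝ (Fin n)) : chi n (B \ A) x = chi n B x - chi n A x := by
  unfold chi
  by_cases hx : x ∈ A
  · simp [hx, hAB hx, Set.mem_diff]
  · by_cases hxB : x ∈ B <;> simp [hx, hxB, Set.mem_diff]

lemma gauss_nonneg (n : ℕ) {t : ℝ} (ht : 0 < t) (x : EuclideanSpace ℝ (Fin n)) :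
    0 ≤ gauss n t x := by
  unfold gauss; positivity

lemma gauss_integrable (n : ℕ) {t : ℝ} (ht : 0 < t) : Integrable (gauss n t) := by
  unfold gauss
  apply Integrable.const_mul
  have h := (GaussianFourier.integrable_cexp_neg_mul_sq_norm_add
    (V := EuclideanSpace ℝ (Fin n)) (b := ((1/(4*t) : ℝ) : ℂ))
    (by simp; positivity) 0 0).norm
  apply h.congr
  filter_upwards with x
  rw [Complex.norm_exp]
  congr 1
  simp [Complex.add_re, Complex.mul_re, ← Complex.ofReal_pow]
  ring

lemma gauss_continuous (n : ℕ) (t : ℝ) : Continuous (gauss n t) := by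
  unfold gauss
  fun_prop

lemma gconv_measurable (n : ℕ) (t : ℝ) {f : EuclideanSpace ℝ (Fin n) → ℝ}
    (hf : Measurable f) : Measurable (gconv n t f) := by
  have h : StronglyMeasurable
      (fun p : EuclideanSpace ℝ (Fin n) × EuclideanSpace ℝ (Fin n) =>
        gauss n t (p.1 - p.2) * f p.2) := by
    apply Measurable.stronglyMeasurable
    exact (((gauss_continuous n t).measurable).comp (measurable_fst.sub measurable_snd)).mul
      (hf.comp measurable_snd)
  exact h.integral_prod_right'.measurable

lemma gconv_bound (n : ℕ) {t : ℝ} (ht : 0 < t) {f : EuclideanSpace ℝ (Fin n) → ℝ}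
    {M : ℝ} (hf0 : ∀ y, 0 ≤ f y) (hfM : ∀ y, f y ≤ M) (x : EuclideanSpace ℝ (Fin n)) :
    |gconv n t f x| ≤ M * ∫ y, gauss n t y := by
  have hMint : Integrable (fun y => gauss n t (x - y) * M) :=
    ((gauss_integrable n ht).comp_sub_left x).mul_const M
  have h1 : |gconv n t f x| ≤ ∫ y, |gauss n t (x - y) * f y| := by
    unfold gconv
    simpa [Real.norm_eq_abs, abs_mul] using
      norm_integral_le_integral_norm (μ := volume) (fun y => gauss n t (x - y) * f y)
  have h2 : (∫ y, |gauss n t (x - y) * f y|) ≤ ∫ y, gauss n t (x - y) * M := by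
    apply integral_mono_of_nonneg
    · filter_upwards with y; positivity
    · exact hMint
    · filter_upwards with y
      rw [abs_mul, abs_of_nonneg (gauss_nonneg n ht _), abs_of_nonneg (hf0 y)]
      exact mul_le_mul_of_nonneg_left (hfM y) (gauss_nonneg n ht _)
  have h3 : (∫ y, gauss n t (x - y) * M) = M * ∫ y, gauss n t y := by
    rw [integral_mul_const, integral_sub_left_eq_self (gauss n t) volume x, mul_comm]
  exact h1.trans (h2.trans h3.le)

end Aux

/-- the volume-preserving thresholding step minimizes the linearized
functional `L̂(u₁,u₂) = ∫ u₁ φ₁ + ∫ u₂ φ₂` over `K`. -/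
theorem thresholding_minimizes_linearized (n : ℕ) (hn : 1 ≤ n)
    (Ωt Ω : Set (EuclideanSpace ℝ (Fin n)))
    (hΩtb : Bornology.IsBounded Ωt) (hΩtm : MeasurableSet Ωt)
    (hΩ : Ω ⊆ Ωt) (hΩm : MeasurableSet Ω)
    (γLV γSL γSV δt V₀ : ℝ)
    (hγLV : 0 < γLV) (hγSL : 0 < γSL) (hγSV : 0 < γSV) (hδt : 0 < δt) (hV₀ : 0 < V₀)
    (D₁k : Set (EuclideanSpace ℝ (Fin n))) (hD₁k : D₁k ⊆ Ω) (hD₁km : MeasurableSet D₁k)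
    (hB : (chi n D₁k, chi n (Ω \ D₁k)) ∈ Bset n Ω V₀)
    (φ₁ φ₂ : EuclideanSpace ℝ (Fin n) → ℝ)
    (hφ₁ : φ₁ = fun x => (1 / Real.sqrt δt) *
      gconv n δt (fun y => γLV * chi n (Ω \ D₁k) y + γSL * chi n (Ωt \ Ω) y) x)
    (hφ₂ : φ₂ = fun x => (1 / Real.sqrt δt) *
      gconv n δt (fun y => γLV * chi n D₁k y + γSV * chi n (Ωt \ Ω) y) x)
    (δ : ℝ)
    (D₁next : Set (EuclideanSpace ℝ (Fin n)))
    (hD₁next : D₁next = {x ∈ Ω | φ₁ x < φ₂ x + δ})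
    (hvol : volume D₁next = ENNReal.ofReal V₀) :
    ∀ u₁ u₂ : EuclideanSpace ℝ (Fin n) → ℝ, (u₁, u₂) ∈ Kset n Ω V₀ →
      (∫ x, chi n D₁next x * φ₁ x) + (∫ x, chi n (Ω \ D₁next) x * φ₂ x)
        ≤ (∫ x, u₁ x * φ₁ x) + ∫ x, u₂ x * φ₂ x := by
  intro u₁ u₂ hu
  obtain ⟨hu₁m, hu₂m, hae, hintu₁⟩ := hu
  -- basic facts
  have hφ₁m : Measurable φ₁ := by
    rw [hφ₁]
    exact (gconv_measurable n δt
      (((chi_measurable n (hΩm.diff hD₁km)).const_mul γLV).add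
        ((chi_measurable n (hΩtm.diff hΩm)).const_mul γSL))).const_mul _
  have hφ₂m : Measurable φ₂ := by
    rw [hφ₂]
    exact (gconv_measurable n δt
      (((chi_measurable n hD₁km).const_mul γLV).add
        ((chi_measurable n (hΩtm.diff hΩm)).const_mul γSV))).const_mul _
  have hsub : D₁next ⊆ Ω := by rw [hD₁next]; exact fun x hx => hx.1
  have hD₁nextm : MeasurableSet D₁next := by
    rw [hD₁next]
    exact hΩm.inter (measurableSet_lt hφ₁m (hφ₂m.add measurable_const))
  have hΩfin : volume Ω < ⊤ := lt_of_le_of_lt (measure_mono hΩ) hΩtb.measure_lt_top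
  -- uniform bound on φ₁, φ₂
  set I : ℝ := ∫ y, gauss n δt y with hI
  have hInn : 0 ≤ I := integral_nonneg (gauss_nonneg n hδt)
  have hs : 0 ≤ 1 / Real.sqrt δt := by positivity
  set C : ℝ := (1 / Real.sqrt δt) * ((γLV + γSL + γSV) * I) with hC
  have hφ₁b : ∀ x, |φ₁ x| ≤ C := by
    intro x
    rw [hφ₁]
    simp only [abs_mul, abs_of_nonneg hs]
    have hb := gconv_bound n hδt (f := fun y => γLV * chi n (Ω \ D₁k) y + γSL * chi n (Ωt \ Ω) y)
      (M := γLV + γSL)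
      (fun y => by
        have := chi_nonneg n (Ω \ D₁k) y; have := chi_nonneg n (Ωt \ Ω) y
        nlinarith)
      (fun y => by
        have h1 := chi_le_one n (Ω \ D₁k) y; have h2 := chi_le_one n (Ωt \ Ω) y
        have h3 := chi_nonneg n (Ω \ D₁k) y; have h4 := chi_nonneg n (Ωt \ Ω) y
        nlinarith [mul_le_mul_of_nonneg_left h1 hγLV.le, mul_le_mul_of_nonneg_left h2 hγSL.le]) x
    calc (1 / Real.sqrt δt) * |gconv n δt (fun y => γLV * chi n (Ω \ D₁k) y + γSL * chi n (Ωt \ Ω) y) x|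
        ≤ (1 / Real.sqrt δt) * ((γLV + γSL) * I) := by
          exact mul_le_mul_of_nonneg_left hb hs
      _ ≤ C := by
          rw [hC]
          have : (γLV + γSL) * I ≤ (γLV + γSL + γSV) * I :=
            mul_le_mul_of_nonneg_right (by linarith) hInn
          exact mul_le_mul_of_nonneg_left this hs
  have hφ₂b : ∀ x, |φ₂ x| ≤ C := by
    intro x
    rw [hφ₂]
    simp only [abs_mul, abs_of_nonneg hs]
    have hb := gconv_bound n hδt (f := fun y => γLV * chi n D₁k y + γSV * chi n (Ωt \ Ω) y)
      (M := γLV + γSV)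
      (fun y => by
        have := chi_nonneg n D₁k y; have := chi_nonneg n (Ωt \ Ω) y
        nlinarith)
      (fun y => by
        have h1 := chi_le_one n D₁k y; have h2 := chi_le_one n (Ωt \ Ω) y
        have h3 := chi_nonneg n D₁k y; have h4 := chi_nonneg n (Ωt \ Ω) y
        nlinarith [mul_le_mul_of_nonneg_left h1 hγLV.le, mul_le_mul_of_nonneg_left h2 hγSV.le]) x
    calc (1 / Real.sqrt δt) * |gconv n δt (fun y => γLV * chi n D₁k y + γSV * chi n (Ωt \ Ω) y) x|
        ≤ (1 / Real.sqrt δt) * ((γLV + γSV) * I) := by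
          exact mul_le_mul_of_nonneg_left hb hs
      _ ≤ C := by
          rw [hC]
          have : (γLV + γSV) * I ≤ (γLV + γSL + γSV) * I :=
            mul_le_mul_of_nonneg_right (by linarith) hInn
          exact mul_le_mul_of_nonneg_left this hs
  have hCnn : 0 ≤ C := le_trans (abs_nonneg _) (hφ₁b 0)
  -- generic integrability criterion
  have hdom : ∀ (g : EuclideanSpace ℝ (Fin n) → ℝ) (Cg : ℝ), Measurable g →
      (∀ᵐ x ∂(volume : Measure (EuclideanSpace ℝ (Fin n))), |g x| ≤ Cg * chi n Ω x) →
      Integrable g := by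
    intro g Cg hgm hg
    have hbnd : Integrable (fun x => Cg * chi n Ω x) := by
      have : (fun x => Cg * chi n Ω x) = Set.indicator Ω (fun _ => Cg) := by
        funext x
        unfold chi
        by_cases hx : x ∈ Ω <;> simp [hx]
      rw [this]
      exact (integrableOn_const hΩfin.ne).integrable_indicator hΩm
    exact Integrable.mono' hbnd hgm.aestronglyMeasurable
      (by filter_upwards [hg] with x hx using by simpa [Real.norm_eq_abs] using hx)
  -- a.e. bounds from membership in K
  have hu₁le : ∀ᵐ x ∂(volume : Measure (EuclideanSpace ℝ (Fin n))),
      0 ≤ u₁ x ∧ u₁ x ≤ chi n Ω x ∧ 0 ≤ u₂ x ∧ u₂ x ≤ chi n Ω x := by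
    filter_upwards [hae] with x ⟨h1, h2, h3, h4, h5⟩
    exact ⟨h1, by linarith, h3, by linarith⟩
  set a : EuclideanSpace ℝ (Fin n) → ℝ := chi n D₁next with ha
  set b : EuclideanSpace ℝ (Fin n) → ℝ := chi n (Ω \ D₁next) with hbdef
  have ham : Measurable a := chi_measurable n hD₁nextm
  have hbm : Measurable b := chi_measurable n (hΩm.diff hD₁nextm)
  have haΩ : ∀ x, 0 ≤ a x ∧ a x ≤ chi n Ω x :=
    fun x => ⟨chi_nonneg n _ x, chi_mono n hsub x⟩
  have hbΩ : ∀ x, 0 ≤ b x ∧ b x ≤ chi n Ω x :=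
    fun x => ⟨chi_nonneg n _ x, chi_mono n Set.diff_subset x⟩
  -- integrabilities
  have int_u₁φ₁ : Integrable (fun x => u₁ x * φ₁ x) := by
    apply hdom _ C (hu₁m.mul hφ₁m)
    filter_upwards [hu₁le] with x ⟨h1, h2, _, _⟩
    rw [Pi.mul_apply, abs_mul]
    calc |u₁ x| * |φ₁ x| ≤ chi n Ω x * C :=
          mul_le_mul (by rwa [abs_of_nonneg h1]) (hφ₁b x) (abs_nonneg _) (chi_nonneg n Ω x)
      _ = C * chi n Ω x := mul_comm _ _
  have int_u₂φ₂ : Integrable (fun x => u₂ x * φ₂ x) := by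
    apply hdom _ C (hu₂m.mul hφ₂m)
    filter_upwards [hu₁le] with x ⟨_, _, h3, h4⟩
    rw [Pi.mul_apply, abs_mul]
    calc |u₂ x| * |φ₂ x| ≤ chi n Ω x * C :=
          mul_le_mul (by rwa [abs_of_nonneg h3]) (hφ₂b x) (abs_nonneg _) (chi_nonneg n Ω x)
      _ = C * chi n Ω x := mul_comm _ _
  have int_aφ₁ : Integrable (fun x => a x * φ₁ x) := by
    apply hdom _ C (ham.mul hφ₁m)
    filter_upwards with x
    rw [Pi.mul_apply, abs_mul]
    calc |a x| * |φ₁ x| ≤ chi n Ω x * C :=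
          mul_le_mul (by rw [abs_of_nonneg (haΩ x).1]; exact (haΩ x).2) (hφ₁b x)
            (abs_nonneg _) (chi_nonneg n Ω x)
      _ = C * chi n Ω x := mul_comm _ _
  have int_bφ₂ : Integrable (fun x => b x * φ₂ x) := by
    apply hdom _ C (hbm.mul hφ₂m)
    filter_upwards with x
    rw [Pi.mul_apply, abs_mul]
    calc |b x| * |φ₂ x| ≤ chi n Ω x * C :=
          mul_le_mul (by rw [abs_of_nonneg (hbΩ x).1]; exact (hbΩ x).2) (hφ₂b x)
            (abs_nonneg _) (chi_nonneg n Ω x)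
      _ = C * chi n Ω x := mul_comm _ _
  have int_u₁ : Integrable u₁ := by
    apply hdom _ 1 hu₁m
    filter_upwards [hu₁le] with x ⟨h1, h2, _, _⟩
    rw [abs_of_nonneg h1, one_mul]; exact h2
  have int_a : Integrable a := by
    apply hdom _ 1 ham
    filter_upwards with x
    rw [abs_of_nonneg (haΩ x).1, one_mul]; exact (haΩ x).2
  -- ∫ a = V₀
  have hIa : (∫ x, a x) = V₀ := by
    have : (∫ x, a x) = (volume D₁next).toReal := by
      rw [ha]
      unfold chi
      exact integral_indicator_one hD₁nextm
    rw [this, hvol, ENNReal.toReal_ofReal hV₀.le]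
  -- key algebraic identity a.e.
  have key1 : ∀ᵐ x ∂(volume : Measure (EuclideanSpace ℝ (Fin n))),
      (u₁ x - a x) * (φ₁ x - φ₂ x - δ) =
        (u₁ x * φ₁ x - a x * φ₁ x) + (u₂ x * φ₂ x - b x * φ₂ x) - δ * (u₁ x - a x) := by
    filter_upwards [hae] with x ⟨_, _, _, _, h5⟩
    have hbx : b x = chi n Ω x - a x := chi_diff n hsub x
    have hu2 : u₂ x = chi n Ω x - u₁ x := by linarith
    rw [hu2, hbx]
    ring
  -- key sign condition a.e.
  have key2 : ∀ᵐ x ∂(volume : Measure (EuclideanSpace ℝ (Fin n))),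
      0 ≤ (u₁ x - a x) * (φ₁ x - φ₂ x - δ) := by
    filter_upwards [hae] with x ⟨h1, h2, h3, h4, h5⟩
    by_cases hxD : x ∈ D₁next
    · have hax : a x = 1 := by rw [ha]; unfold chi; simp [hxD]
      have hxΩ : x ∈ Ω ∧ φ₁ x < φ₂ x + δ := by rw [hD₁next] at hxD; exact hxD
      have hψ : φ₁ x - φ₂ x - δ ≤ 0 := by linarith [hxΩ.2]
      have hu : u₁ x - a x ≤ 0 := by rw [hax]; linarith
      have := mul_nonneg (neg_nonneg.2 hu) (neg_nonneg.2 hψ)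
      rwa [neg_mul_neg] at this
    · have hax : a x = 0 := by rw [ha]; unfold chi; simp [hxD]
      rw [hax, sub_zero]
      by_cases hxΩ : x ∈ Ω
      · have hψ : 0 ≤ φ₁ x - φ₂ x - δ := by
          have hnc : ¬(φ₁ x < φ₂ x + δ) := fun hc => hxD (by rw [hD₁next]; exact ⟨hxΩ, hc⟩)
          push_neg at hnc
          linarith
        exact mul_nonneg h1 hψ
      · have hchi : chi n Ω x = 0 := by unfold chi; simp [hxΩ]
        have hu0 : u₁ x = 0 := by rw [hchi] at h5; linarith
        rw [hu0]
        simp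
  -- conclude
  have h0 : (0:ℝ) ≤ ∫ x, (u₁ x - a x) * (φ₁ x - φ₂ x - δ) := integral_nonneg_of_ae key2
  have heq : (∫ x, (u₁ x - a x) * (φ₁ x - φ₂ x - δ)) =
      ((∫ x, u₁ x * φ₁ x) - ∫ x, a x * φ₁ x) + ((∫ x, u₂ x * φ₂ x) - ∫ x, b x * φ₂ x) := by
    have intS1 : Integrable (fun x => u₁ x * φ₁ x - a x * φ₁ x) := int_u₁φ₁.sub int_aφ₁
    have intS2 : Integrable (fun x => u₂ x * φ₂ x - b x * φ₂ x) := int_u₂φ₂.sub int_bφ₂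
    have intSum : Integrable
        (fun x => (u₁ x * φ₁ x - a x * φ₁ x) + (u₂ x * φ₂ x - b x * φ₂ x)) := intS1.add intS2
    have intD : Integrable (fun x => δ * (u₁ x - a x)) := (int_u₁.sub int_a).const_mul δ
    rw [integral_congr_ae key1]
    rw [integral_sub intSum intD, integral_add intS1 intS2,
      integral_sub int_u₁φ₁ int_aφ₁, integral_sub int_u₂φ₂ int_bφ₂,
      integral_const_mul, integral_sub int_u₁ int_a, hintu₁, hIa]
    ring
  rw [heq] at h0
  linarith
end

section
/- Let u₁, u₂, u₁', u₂' : ℝⁿ → ℝ be bounded measurable integrable functions with u₁ + u₂ = u₁' + u₂' almost everywhere, and let t > 0. Then ∫ u₁' (G_t*u₂) + ∫ u₂' (G_t*u₁) − ∫ u₁' (G_t*u₂') − ∫ u₁ (G_t*u₂) = ∫ (u₁' − u₁) (G_t * (u₁' − u₁)) ≥ 0. -/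
open MeasureTheory Real Set

namespace GaussAux

variable {n : ℕ} {t : ℝ}

local notation "E" => EuclideanSpace ℝ (Fin n)

lemma continuous_gauss : Continuous (gauss n t) := by
  unfold gauss
  exact continuous_const.mul (Real.continuous_exp.comp
    (((continuous_norm.pow 2).neg).div_const _))

lemma measurable_gauss : Measurable (gauss n t) := continuous_gauss.measurable

lemma gauss_nonneg (ht : 0 < t) (x : E) : 0 ≤ gauss n t x := by
  unfold gauss; positivity

lemma gauss_le (ht : 0 < t) (x : E) : gauss n t x ≤ (4 * π * t) ^ (-(n : ℝ) / 2) := by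
  unfold gauss
  have h1 : Real.exp (-‖x‖ ^ 2 / (4 * t)) ≤ 1 := by
    rw [Real.exp_le_one_iff]
    exact div_nonpos_of_nonpos_of_nonneg (neg_nonpos.mpr (by positivity)) (by positivity)
  have hK : (0:ℝ) < (4 * π * t) ^ (-(n : ℝ) / 2) := by
    have : (0:ℝ) < 4 * π * t := by positivity
    positivity
  exact mul_le_of_le_one_right hK.le h1

lemma gauss_sub_symm (x y : E) : gauss n t (x - y) = gauss n t (y - x) := by
  unfold gauss; rw [norm_sub_rev]

lemma integrable_exp_neg_mul_sq_norm {b : ℝ} (hb : 0 < b) :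
    Integrable (fun v : E => Real.exp (-b * ‖v‖ ^ 2)) := by
  have h := GaussianFourier.integrable_cexp_neg_mul_sq_norm_add (V := E) (b := (b:ℂ))
      (by simpa using hb) 0 (0 : E)
  have h2 := h.re
  refine h2.congr (Filter.Eventually.of_forall fun v => ?_)
  simp only []
  norm_num
  rw [show (-(↑b * (‖v‖:ℂ) ^ 2)) = ((-(b * ‖v‖ ^ 2) : ℝ) : ℂ) by push_cast; ring,
    Complex.exp_ofReal_re]

lemma integrable_gauss (ht : 0 < t) : Integrable (gauss n t) := by
  have hb : (0:ℝ) < 1 / (4 * t) := by positivity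
  have h := (integrable_exp_neg_mul_sq_norm (n := n) hb).const_mul
    ((4 * π * t) ^ (-(n : ℝ) / 2))
  refine h.congr (Filter.Eventually.of_forall fun v => ?_)
  show _ * _ = _
  unfold gauss
  congr 1
  ring

lemma const_calc (hs : 0 < t) :
    (((4 * π * t) ^ (-(n : ℝ) / 2)) ^ 2) * (π / (1 / (2 * t))) ^ ((n : ℝ) / 2)
      = (4 * π * (2 * t)) ^ (-(n : ℝ) / 2) := by
  have h2s : π / (1 / (2 * t)) = 2 * π * t := by
    rw [one_div, div_eq_mul_inv, inv_inv]; ring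
  have h4 : (0:ℝ) < 4 * π * t := by positivity
  have h8 : (0:ℝ) < 4 * π * (2 * t) := by positivity
  have h2 : (0:ℝ) < 2 * π * t := by positivity
  have he : -(n:ℝ) / 2 = -((n:ℝ) / 2) := by ring
  have main : (2*π*t) ^ ((n:ℝ)/2) * ((4*π*(2*t)) ^ ((n:ℝ)/2))
      = ((4*π*t) ^ ((n:ℝ)/2)) * ((4*π*t) ^ ((n:ℝ)/2)) := by
    rw [← Real.mul_rpow h2.le h8.le, ← Real.mul_rpow h4.le h4.le]
    congr 1
    ring
  have n4 : ((4*π*t) ^ ((n:ℝ)/2)) ≠ 0 := (Real.rpow_pos_of_pos h4 _).ne'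
  have n8 : ((4*π*(2*t)) ^ ((n:ℝ)/2)) ≠ 0 := (Real.rpow_pos_of_pos h8 _).ne'
  rw [h2s, he, Real.rpow_neg h4.le, Real.rpow_neg h8.le]
  field_simp
  ring_nf at main ⊢
  linear_combination main

lemma gauss_conv_gauss (ht : 0 < t) (x y : E) :
    (∫ z, gauss n (t/2) (x - z) * gauss n (t/2) (z - y)) = gauss n t (x - y) := by
  have hs0 : 0 < t / 2 := by positivity
  set s := t / 2 with hsdef
  set m : E := (2:ℝ)⁻¹ • (x + y) with hm
  set K : ℝ := (4 * π * s) ^ (-(n : ℝ) / 2) with hK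
  set C : ℝ := K ^ 2 * Real.exp (-‖x - y‖ ^ 2 / (8 * s)) with hC
  have key : ∀ z : E, gauss n s (x - z) * gauss n s (z - y)
      = C * Real.exp (-(1 / (2 * s)) * ‖z - m‖ ^ 2) := by
    intro z
    have hpar : ‖x - z‖ ^ 2 + ‖z - y‖ ^ 2 = (‖x - y‖ ^ 2 + 4 * ‖z - m‖ ^ 2) / 2 := by
      have h := parallelogram_law_with_norm ℝ (x - z) (z - y)
      have h2 : (x - z) + (z - y) = x - y := by abel
      have h3 : (x - z) - (z - y) = (2:ℝ) • (m - z) := by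
        rw [hm]; module
      have h4 : ‖(2:ℝ) • (m - z)‖ = 2 * ‖m - z‖ := by
        rw [norm_smul]; simp
      rw [h2, h3, h4] at h
      have h5 : ‖m - z‖ = ‖z - m‖ := norm_sub_rev _ _
      rw [h5] at h
      nlinarith [h]
    have hexp : -‖x - z‖ ^ 2 / (4 * s) + -‖z - y‖ ^ 2 / (4 * s)
        = -‖x - y‖ ^ 2 / (8 * s) + -(1 / (2 * s)) * ‖z - m‖ ^ 2 := by
      have e1 : -‖x - z‖ ^ 2 / (4 * s) + -‖z - y‖ ^ 2 / (4 * s)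
          = -((‖x - z‖ ^ 2 + ‖z - y‖ ^ 2)) / (4 * s) := by ring
      rw [e1, hpar]
      field_simp
      ring
    unfold gauss
    rw [hC, hK]
    rw [show ((4*π*s) ^ (-(n:ℝ)/2) * Real.exp (-‖x - z‖ ^ 2 / (4 * s))) *
        ((4*π*s) ^ (-(n:ℝ)/2) * Real.exp (-‖z - y‖ ^ 2 / (4 * s)))
        = ((4*π*s) ^ (-(n:ℝ)/2)) ^ 2 *
          (Real.exp (-‖x - z‖ ^ 2 / (4 * s)) * Real.exp (-‖z - y‖ ^ 2 / (4 * s))) by ring,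
      ← Real.exp_add, hexp, Real.exp_add]
    ring
  calc (∫ z, gauss n s (x - z) * gauss n s (z - y))
      = ∫ z, C * Real.exp (-(1 / (2 * s)) * ‖z - m‖ ^ 2) := by
        simp only [key]
    _ = C * ∫ z, Real.exp (-(1 / (2 * s)) * ‖z - m‖ ^ 2) := integral_const_mul _ _
    _ = C * ∫ z, Real.exp (-(1 / (2 * s)) * ‖z‖ ^ 2) := by
        rw [integral_sub_right_eq_self (fun z : E => Real.exp (-(1 / (2 * s)) * ‖z‖ ^ 2)) m]
    _ = C * (π / (1 / (2 * s))) ^ ((n : ℝ) / 2) := by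
        rw [GaussianFourier.integral_rexp_neg_mul_sq_norm (by positivity),
          finrank_euclideanSpace_fin]
    _ = gauss n t (x - y) := by
        unfold gauss
        rw [hC, hK]
        have h8 : 8 * s = 4 * t := by rw [hsdef]; ring
        have h42 : 4 * π * t = 4 * π * (2 * s) := by rw [hsdef]; ring
        rw [h8, h42]
        rw [show K ^ 2 * Real.exp (-‖x - y‖ ^ 2 / (4 * t)) * (π / (1 / (2 * s))) ^ ((n:ℝ)/2)
            = (K ^ 2 * (π / (1 / (2 * s))) ^ ((n:ℝ)/2)) * Real.exp (-‖x - y‖ ^ 2 / (4 * t)) by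
              ring]
        rw [hK, const_calc hs0]

lemma integrable_gauss_mul (ht : 0 < t) {g : E → ℝ} (hgi : Integrable g) (x : E) :
    Integrable (fun y => gauss n t (x - y) * g y) :=
  hgi.bdd_mul ((measurable_gauss.comp (measurable_const.sub measurable_id)).aestronglyMeasurable)
    (c := (4 * π * t) ^ (-(n : ℝ) / 2)) (Filter.Eventually.of_forall fun y => by
      rw [Real.norm_eq_abs, abs_of_nonneg (gauss_nonneg ht _)]
      exact gauss_le ht _)

lemma gconv_sub (ht : 0 < t) {g g' : E → ℝ} (hgi : Integrable g) (hgi' : Integrable g')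
    (x : E) :
    gconv n t (fun y => g y - g' y) x = gconv n t g x - gconv n t g' x := by
  unfold gconv
  rw [← integral_sub (integrable_gauss_mul ht hgi x) (integrable_gauss_mul ht hgi' x)]
  congr 1
  ext y
  ring

lemma gconv_congr {g g' : E → ℝ} (h : g =ᵐ[volume] g') (x : E) :
    gconv n t g x = gconv n t g' x :=
  integral_congr_ae (h.mono fun y hy => by simp only [hy])

lemma aesm_gconv {g : E → ℝ} (hg : Measurable g) :
    AEStronglyMeasurable (gconv n t g) (volume : Measure E) := by
  have hmeas : Measurable fun p : E × E => gauss n t (p.1 - p.2) * g p.2 :=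
    (measurable_gauss.comp (measurable_fst.sub measurable_snd)).mul (hg.comp measurable_snd)
  exact hmeas.aestronglyMeasurable.integral_prod_right'

lemma gconv_bound (ht : 0 < t) {g : E → ℝ} (hgi : Integrable g) (x : E) :
    |gconv n t g x| ≤ (4 * π * t) ^ (-(n : ℝ) / 2) * ∫ y, |g y| := by
  unfold gconv
  calc |∫ y, gauss n t (x - y) * g y| ≤ ∫ y, |gauss n t (x - y)| * |g y| := by
        simpa [Real.norm_eq_abs, abs_mul] using
          norm_integral_le_integral_norm (fun y => gauss n t (x - y) * g y)
    _ ≤ ∫ y, (4 * π * t) ^ (-(n : ℝ) / 2) * |g y| := by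
        refine integral_mono_of_nonneg
          (Filter.Eventually.of_forall fun y => by positivity)
          (hgi.abs.const_mul _) (Filter.Eventually.of_forall fun y => ?_)
        show |gauss n t (x - y)| * |g y| ≤ _
        rw [abs_of_nonneg (gauss_nonneg ht _)]
        exact mul_le_mul_of_nonneg_right (gauss_le ht _) (abs_nonneg _)
    _ = (4 * π * t) ^ (-(n : ℝ) / 2) * ∫ y, |g y| := integral_const_mul _ _

lemma integrable_kernel_prod (ht : 0 < t) {g : E → ℝ} (hgi : Integrable g) :
    Integrable (fun p : E × E => gauss n t (p.1 - p.2) * g p.2)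
      ((volume : Measure E).prod volume) := by
  have h := hgi.convolution_integrand (ContinuousLinearMap.mul ℝ ℝ) (integrable_gauss ht)
  refine h.congr (Filter.Eventually.of_forall fun p => ?_)
  simp [mul_comm]

lemma integrable_mul_gconv (ht : 0 < t) {f g : E → ℝ} (hfi : Integrable f)
    (hg : Measurable g) (hgi : Integrable g) :
    Integrable (fun x => f x * gconv n t g x) := by
  have h := hfi.bdd_mul (aesm_gconv hg)
    (c := (4 * π * t) ^ (-(n : ℝ) / 2) * ∫ y, |g y|) (Filter.Eventually.of_forall fun x => by
      rw [Real.norm_eq_abs]; exact gconv_bound ht hgi x)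
  exact h.congr (Filter.Eventually.of_forall fun x => mul_comm _ _)

lemma gconv_swap (ht : 0 < t) {f g : E → ℝ} (hf : Measurable f)
    (hfb : ∃ C, ∀ x, |f x| ≤ C) (hgi : Integrable g) :
    ∫ x, f x * gconv n t g x = ∫ y, g y * gconv n t f y := by
  obtain ⟨C, hC⟩ := hfb
  have hFi : Integrable (fun p : E × E => f p.1 * (gauss n t (p.1 - p.2) * g p.2))
      ((volume : Measure E).prod volume) :=
    (integrable_kernel_prod ht hgi).bdd_mul
      ((hf.comp measurable_fst).aestronglyMeasurable)
      (c := C) (Filter.Eventually.of_forall fun p => by rw [Real.norm_eq_abs]; exact hC p.1)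
  have h1 : ∀ x : E, f x * gconv n t g x = ∫ y, f x * (gauss n t (x - y) * g y) :=
    fun x => (integral_const_mul _ _).symm
  have h2 : ∀ y : E, (∫ x, f x * (gauss n t (x - y) * g y)) = g y * gconv n t f y := by
    intro y
    unfold gconv
    rw [← integral_const_mul]
    congr 1
    ext x
    rw [gauss_sub_symm]
    ring
  calc ∫ x, f x * gconv n t g x = ∫ x, ∫ y, f x * (gauss n t (x - y) * g y) := by
        simp only [h1]
    _ = ∫ y, ∫ x, f x * (gauss n t (x - y) * g y) := integral_integral_swap hFi
    _ = ∫ y, g y * gconv n t f y := by simp only [h2]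

lemma integrable_gconv (ht : 0 < t) {g : E → ℝ} (hgi : Integrable g) :
    Integrable (gconv n t g) := by
  have h := (integrable_gauss (n := n) ht).integrable_convolution
    (ContinuousLinearMap.mul ℝ ℝ) hgi
  refine h.congr (Filter.Eventually.of_forall fun x => ?_)
  show (∫ y, gauss n t y * g (x - y)) = gconv n t g x
  unfold gconv
  rw [show (∫ y, gauss n t (x - y) * g y)
      = ∫ y, gauss n t (x - (x - y)) * g (x - y) from
    (integral_sub_left_eq_self (fun y => gauss n t (x - y) * g y) volume x).symm]
  congr 1
  ext y
  rw [sub_sub_cancel]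

lemma gconv_semigroup (ht : 0 < t) {g : E → ℝ} (hgi : Integrable g) (x : E) :
    gconv n t g x = gconv n (t / 2) (gconv n (t / 2) g) x := by
  have hs : 0 < t / 2 := by positivity
  have hFi : Integrable (fun p : E × E =>
      gauss n (t / 2) (x - p.1) * (gauss n (t / 2) (p.1 - p.2) * g p.2))
      ((volume : Measure E).prod volume) :=
    (integrable_kernel_prod hs hgi).bdd_mul
      ((measurable_gauss.comp (measurable_const.sub measurable_fst)).aestronglyMeasurable)
      (c := (4 * π * (t / 2)) ^ (-(n : ℝ) / 2)) (Filter.Eventually.of_forall fun p => by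
        rw [Real.norm_eq_abs, abs_of_nonneg (gauss_nonneg hs _)]
        exact gauss_le hs _)
  have h1 : ∀ z : E, gauss n (t / 2) (x - z) * gconv n (t / 2) g z
      = ∫ y, gauss n (t / 2) (x - z) * (gauss n (t / 2) (z - y) * g y) :=
    fun z => (integral_const_mul _ _).symm
  have h2 : ∀ y : E, (∫ z, gauss n (t / 2) (x - z) * (gauss n (t / 2) (z - y) * g y))
      = gauss n t (x - y) * g y := by
    intro y
    have : ∀ z : E, gauss n (t / 2) (x - z) * (gauss n (t / 2) (z - y) * g y)
        = (gauss n (t / 2) (x - z) * gauss n (t / 2) (z - y)) * g y := fun z => by ring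
    simp only [this]
    rw [integral_mul_const, gauss_conv_gauss ht]
  symm
  calc gconv n (t / 2) (gconv n (t / 2) g) x
      = ∫ z, ∫ y, gauss n (t / 2) (x - z) * (gauss n (t / 2) (z - y) * g y) := by
        unfold gconv; simp only [← h1]; rfl
    _ = ∫ y, ∫ z, gauss n (t / 2) (x - z) * (gauss n (t / 2) (z - y) * g y) :=
        integral_integral_swap hFi
    _ = ∫ y, gauss n t (x - y) * g y := by simp only [h2]
    _ = gconv n t g x := rfl

end GaussAux

open GaussAux in
/-- for bounded measurable integrable `u₁, u₂, u₁', u₂'` with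
`u₁ + u₂ = u₁' + u₂'` a.e. and `t > 0`,
`∫ u₁' (G_t*u₂) + ∫ u₂' (G_t*u₁) − ∫ u₁' (G_t*u₂') − ∫ u₁ (G_t*u₂)
  = ∫ (u₁' − u₁) (G_t * (u₁' − u₁)) ≥ 0`. -/
theorem gaussian_cross_term_identity (n : ℕ) (hn : 1 ≤ n) (t : ℝ) (ht : 0 < t)
    (u₁ u₂ u₁' u₂' : EuclideanSpace ℝ (Fin n) → ℝ)
    (hm₁ : Measurable u₁) (hm₂ : Measurable u₂) (hm₁' : Measurable u₁') (hm₂' : Measurable u₂')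
    (hb₁ : ∃ C, ∀ x, |u₁ x| ≤ C) (hb₂ : ∃ C, ∀ x, |u₂ x| ≤ C)
    (hb₁' : ∃ C, ∀ x, |u₁' x| ≤ C) (hb₂' : ∃ C, ∀ x, |u₂' x| ≤ C)
    (hi₁ : Integrable u₁) (hi₂ : Integrable u₂)
    (hi₁' : Integrable u₁') (hi₂' : Integrable u₂')
    (hsum : ∀ᵐ x ∂(volume : Measure (EuclideanSpace ℝ (Fin n))),
      u₁ x + u₂ x = u₁' x + u₂' x) :
    ((∫ x, u₁' x * gconv n t u₂ x) + (∫ x, u₂' x * gconv n t u₁ x)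
        - (∫ x, u₁' x * gconv n t u₂' x) - ∫ x, u₁ x * gconv n t u₂ x)
      = (∫ x, (u₁' x - u₁ x) * gconv n t (fun y => u₁' y - u₁ y) x) ∧
    0 ≤ ∫ x, (u₁' x - u₁ x) * gconv n t (fun y => u₁' y - u₁ y) x := by
  set v : EuclideanSpace ℝ (Fin n) → ℝ := fun y => u₁' y - u₁ y with hv
  have hmv : Measurable v := hm₁'.sub hm₁
  have hiv : Integrable v := hi₁'.sub hi₁
  have hbv : ∃ C, ∀ x, |v x| ≤ C := by
    obtain ⟨C, hC⟩ := hb₁'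
    obtain ⟨D, hD⟩ := hb₁
    exact ⟨C + D, fun x => (abs_sub _ _).trans (add_le_add (hC x) (hD x))⟩
  have hae : (fun x => u₂ x - u₂' x) =ᵐ[volume] v :=
    hsum.mono fun x hx => by simp only [hv]; linarith
  have e1 : ∫ x, u₂' x * gconv n t u₁ x = ∫ x, u₁ x * gconv n t u₂' x :=
    gconv_swap ht hm₂' hb₂' hi₁
  have e2 : (∫ x, u₁' x * gconv n t u₂ x) - ∫ x, u₁' x * gconv n t u₂' x
      = ∫ x, u₁' x * gconv n t v x := by
    rw [← integral_sub (integrable_mul_gconv ht hi₁' hm₂ hi₂)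
      (integrable_mul_gconv ht hi₁' hm₂' hi₂')]
    refine integral_congr_ae (Filter.Eventually.of_forall fun x => ?_)
    show _ * _ - _ * _ = _ * _
    rw [← mul_sub, ← gconv_sub ht hi₂ hi₂', gconv_congr hae]
  have e3 : (∫ x, u₁ x * gconv n t u₂ x) - ∫ x, u₁ x * gconv n t u₂' x
      = ∫ x, u₁ x * gconv n t v x := by
    rw [← integral_sub (integrable_mul_gconv ht hi₁ hm₂ hi₂)
      (integrable_mul_gconv ht hi₁ hm₂' hi₂')]
    refine integral_congr_ae (Filter.Eventually.of_forall fun x => ?_)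
    show _ * _ - _ * _ = _ * _
    rw [← mul_sub, ← gconv_sub ht hi₂ hi₂', gconv_congr hae]
  have e4 : (∫ x, u₁' x * gconv n t v x) - ∫ x, u₁ x * gconv n t v x
      = ∫ x, v x * gconv n t v x := by
    rw [← integral_sub (integrable_mul_gconv ht hi₁' hmv hiv)
      (integrable_mul_gconv ht hi₁ hmv hiv)]
    refine integral_congr_ae (Filter.Eventually.of_forall fun x => ?_)
    show _ * _ - _ * _ = _ * _
    simp only [hv]
    ring
  have hnn : 0 ≤ ∫ x, v x * gconv n t v x := by
    have hs : 0 < t / 2 := by positivity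
    have hsg : ∫ x, v x * gconv n t v x
        = ∫ x, v x * gconv n (t / 2) (gconv n (t / 2) v) x := by
      refine integral_congr_ae (Filter.Eventually.of_forall fun x => ?_)
      show v x * gconv n t v x = v x * gconv n (t / 2) (gconv n (t / 2) v) x
      rw [gconv_semigroup ht hiv]
    rw [hsg, gconv_swap hs hmv hbv (integrable_gconv hs hiv)]
    exact integral_nonneg fun y => mul_self_nonneg _
  exact ⟨by linarith, hnn⟩
end

section
/- Assume Young's relation γ_LV cos θ_Y = γ_SV − γ_SL for some angle θ_Y, and define the two-phase energy Ẽ(u) = E^{δt}(u, χ_Ω − u) for bounded measurable u with 0 ≤ u ≤ 1 vanishing outside Ω. Then for all such u and v, Ẽ(u) − Ẽ(v) = (γ_LV/√δt) ∫ (u−v) (G_{δt} * (χ_Ω − 2v − cos(θ_Y)·χ_{D₃})) − (γ_LV/√δt) ∫ (u−v)(G_{δt}*(u−v)); in particular, Ẽ(u) ≤ Ẽ(v) + (γ_LV/√δt) ∫ (u−v) (G_{δt} * (χ_Ω − 2v − cos(θ_Y)·χ_{D₃})), i.e. the exact second-order term of the expansion of Ẽ is nonpositive. -/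
set_option maxHeartbeats 1000000


open MeasureTheory Real Set

namespace TwoPhaseAux

variable {n : ℕ}

lemma gauss_nonneg {t : ℝ} (ht : 0 < t) (x : EuclideanSpace ℝ (Fin n)) : 0 ≤ gauss n t x := by
  unfold gauss; positivity

lemma gauss_le {t : ℝ} (ht : 0 < t) (x : EuclideanSpace ℝ (Fin n)) :
    gauss n t x ≤ (4 * Real.pi * t) ^ (-(n : ℝ) / 2) := by
  unfold gauss
  have h1 : Real.exp (-‖x‖ ^ 2 / (4 * t)) ≤ 1 := by
    rw [Real.exp_le_one_iff]
    exact div_nonpos_of_nonpos_of_nonneg (neg_nonpos.mpr (by positivity)) (by positivity)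
  nlinarith [Real.rpow_nonneg (show (0:ℝ) ≤ 4 * Real.pi * t by positivity) (-(n:ℝ)/2)]

lemma gauss_continuous (t : ℝ) : Continuous (gauss n t) := by
  unfold gauss
  exact continuous_const.mul (Real.continuous_exp.comp
    (((continuous_norm.pow 2).neg).div_const (4 * t)))

lemma gauss_symm (t : ℝ) (x y : EuclideanSpace ℝ (Fin n)) :
    gauss n t (x - y) = gauss n t (y - x) := by
  unfold gauss; rw [norm_sub_rev]

lemma integrable_rexp_neg_mul_sq_norm {b : ℝ} (hb : 0 < b) :
    Integrable (fun x : EuclideanSpace ℝ (Fin n) => Real.exp (-b * ‖x‖ ^ 2)) := by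
  have h := (GaussianFourier.integrable_cexp_neg_mul_sq_norm_add
    (V := EuclideanSpace ℝ (Fin n)) (b := (b : ℂ)) (by simpa using hb) 0 0).norm
  refine h.congr (Filter.Eventually.of_forall fun x => ?_)
  dsimp only
  rw [Complex.norm_exp]
  congr 1
  rw [zero_mul, add_zero, ← Complex.ofReal_pow, ← Complex.ofReal_neg, ← Complex.ofReal_mul,
    Complex.ofReal_re]

lemma integrable_gauss {t : ℝ} (ht : 0 < t) : Integrable (gauss n t) := by
  have hb : 0 < (4 * t)⁻¹ := by positivity
  have := (integrable_rexp_neg_mul_sq_norm (n := n) hb).const_mul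
    ((4 * Real.pi * t) ^ (-(n : ℝ) / 2))
  refine this.congr (Filter.Eventually.of_forall fun x => ?_)
  show ((4 * Real.pi * t) ^ (-(n : ℝ) / 2)) * Real.exp (-(4 * t)⁻¹ * ‖x‖ ^ 2) = gauss n t x
  unfold gauss
  congr 1
  rw [div_eq_mul_inv]
  ring

lemma gauss_conv {t : ℝ} (ht : 0 < t) (x y : EuclideanSpace ℝ (Fin n)) :
    ∫ z : EuclideanSpace ℝ (Fin n), gauss n t (x - z) * gauss n t (y - z)
      = gauss n (2 * t) (x - y) := by
  set m : EuclideanSpace ℝ (Fin n) := (2:ℝ)⁻¹ • (x + y) with hm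
  have key : ∀ z, gauss n t (x - z) * gauss n t (y - z)
      = ((4 * Real.pi * t) ^ (-(n:ℝ)/2) * (4 * Real.pi * t) ^ (-(n:ℝ)/2)
          * Real.exp (-‖x - y‖ ^ 2 / (8 * t)))
        * Real.exp (-(2 * t)⁻¹ * ‖m - z‖ ^ 2) := by
    intro z
    unfold gauss
    have hpar : ‖x - z‖ ^ 2 + ‖y - z‖ ^ 2 = 2 * ‖m - z‖ ^ 2 + ‖x - y‖ ^ 2 / 2 := by
      have h := parallelogram_law_with_norm ℝ (x - z) (y - z)
      have h1 : (x - z) + (y - z) = (2:ℝ) • (m - z) := by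
        rw [hm, smul_sub, smul_smul]
        norm_num
        module
      have h2 : (x - z) - (y - z) = x - y := by abel
      rw [h1, h2, norm_smul] at h
      simp [Real.norm_eq_abs] at h
      nlinarith [h]
    have e1 : -‖x - z‖ ^ 2 / (4 * t) + -‖y - z‖ ^ 2 / (4 * t)
        = -‖x - y‖ ^ 2 / (8 * t) + -(2 * t)⁻¹ * ‖m - z‖ ^ 2 := by
      have e0 : -‖x - z‖ ^ 2 / (4 * t) + -‖y - z‖ ^ 2 / (4 * t)
          = -(‖x - z‖ ^ 2 + ‖y - z‖ ^ 2) / (4 * t) := by ring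
      rw [e0, hpar]
      field_simp
      ring
    rw [show ((4 * Real.pi * t) ^ (-(n:ℝ)/2) * Real.exp (-‖x - z‖ ^ 2 / (4 * t))) *
        ((4 * Real.pi * t) ^ (-(n:ℝ)/2) * Real.exp (-‖y - z‖ ^ 2 / (4 * t)))
      = (4 * Real.pi * t) ^ (-(n:ℝ)/2) * (4 * Real.pi * t) ^ (-(n:ℝ)/2)
        * (Real.exp (-‖x - z‖ ^ 2 / (4 * t)) * Real.exp (-‖y - z‖ ^ 2 / (4 * t))) from by ring,
      ← Real.exp_add, e1, Real.exp_add]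
    ring
  simp_rw [key]
  rw [integral_const_mul]
  have hint : ∫ z : EuclideanSpace ℝ (Fin n), Real.exp (-(2 * t)⁻¹ * ‖m - z‖ ^ 2)
      = (Real.pi / (2 * t)⁻¹) ^ ((n:ℝ) / 2) := by
    have h2 := integral_sub_left_eq_self
      (fun w : EuclideanSpace ℝ (Fin n) => Real.exp (-(2 * t)⁻¹ * ‖w‖ ^ 2)) volume m
    rw [h2]
    have := GaussianFourier.integral_rexp_neg_mul_sq_norm
      (V := EuclideanSpace ℝ (Fin n)) (show 0 < (2*t)⁻¹ by positivity)
    rw [this, finrank_euclideanSpace_fin]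
  rw [hint]
  unfold gauss
  have hπ2 : Real.pi / (2 * t)⁻¹ = 2 * Real.pi * t := by field_simp
  rw [hπ2]
  have hfac : (4 * Real.pi * t) ^ (-(n:ℝ)/2) * (4 * Real.pi * t) ^ (-(n:ℝ)/2)
      * (2 * Real.pi * t) ^ ((n:ℝ)/2) = (4 * Real.pi * (2 * t)) ^ (-(n:ℝ)/2) := by
    have h1 : ((n:ℝ)/2) = -(-(n:ℝ)/2) := by ring
    rw [h1, Real.rpow_neg (by positivity), ← Real.inv_rpow (by positivity),
      ← Real.mul_rpow (by positivity) (by positivity),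
      ← Real.mul_rpow (by positivity) (by positivity)]
    congr 1
    have hπ := Real.pi_pos
    field_simp
    ring
  rw [show 4 * (2 * t) = 8 * t by ring]
  rw [← hfac]
  ring


/-- Bounded measurable functions vanishing outside `Ωt`. -/
def Nice (Ωt : Set (EuclideanSpace ℝ (Fin n))) (f : EuclideanSpace ℝ (Fin n) → ℝ) : Prop :=
  Measurable f ∧ (∃ C, ∀ x, |f x| ≤ C) ∧ ∀ x ∉ Ωt, f x = 0

/-- The Gaussian bilinear form as a double integral. -/
noncomputable def B (n : ℕ) (δt : ℝ) (f g : EuclideanSpace ℝ (Fin n) → ℝ) : ℝ :=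
  ∫ p : EuclideanSpace ℝ (Fin n) × EuclideanSpace ℝ (Fin n),
    f p.1 * gauss n δt (p.1 - p.2) * g p.2

variable {δt : ℝ} {Ωt : Set (EuclideanSpace ℝ (Fin n))}
  {f g f₁ f₂ g₁ g₂ : EuclideanSpace ℝ (Fin n) → ℝ}

lemma measurable_ker (hf : Measurable f) (hg : Measurable g) :
    Measurable (fun p : EuclideanSpace ℝ (Fin n) × EuclideanSpace ℝ (Fin n) =>
      f p.1 * gauss n δt (p.1 - p.2) * g p.2) :=
  ((hf.comp measurable_fst).mul
    ((gauss_continuous δt).measurable.comp (measurable_fst.sub measurable_snd))).mul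
    (hg.comp measurable_snd)

lemma integrable_B (hδt : 0 < δt) (hΩtm : MeasurableSet Ωt) (hfin : volume Ωt ≠ ⊤)
    (hf : Nice Ωt f) (hg : Nice Ωt g) :
    Integrable (fun p : EuclideanSpace ℝ (Fin n) × EuclideanSpace ℝ (Fin n) =>
      f p.1 * gauss n δt (p.1 - p.2) * g p.2) := by
  obtain ⟨hfm, ⟨Cf, hCf⟩, hf0⟩ := hf
  obtain ⟨hgm, ⟨Cg, hCg⟩, hg0⟩ := hg
  set M : ℝ := (4 * Real.pi * δt) ^ (-(n : ℝ) / 2) with hM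
  have hM0 : 0 ≤ M := Real.rpow_nonneg (by positivity) _
  have hCf0 : 0 ≤ Cf := le_trans (abs_nonneg _) (hCf 0)
  have hCg0 : 0 ≤ Cg := le_trans (abs_nonneg _) (hCg 0)
  refine Integrable.mono' (g := (Ωt ×ˢ Ωt).indicator fun _ => Cf * M * Cg) ?_ ?_ ?_
  · rw [integrable_indicator_iff (hΩtm.prod hΩtm)]
    refine integrableOn_const ?_
    rw [Measure.volume_eq_prod, Measure.prod_prod]
    exact (ENNReal.mul_lt_top hfin.lt_top hfin.lt_top).ne
  · exact (measurable_ker hfm hgm).aestronglyMeasurable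
  · refine Filter.Eventually.of_forall fun p => ?_
    by_cases hp : p ∈ Ωt ×ˢ Ωt
    · rw [indicator_of_mem hp]
      rw [Real.norm_eq_abs, abs_mul, abs_mul]
      have h1 : |gauss n δt (p.1 - p.2)| ≤ M := by
        rw [abs_of_nonneg (gauss_nonneg hδt _)]; exact gauss_le hδt _
      exact mul_le_mul (mul_le_mul (hCf _) h1 (abs_nonneg _) hCf0)
        (hCg _) (abs_nonneg _) (by positivity)
    · rw [indicator_of_notMem hp]
      rw [mem_prod] at hp
      push_neg at hp
      by_cases h1 : p.1 ∈ Ωt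
      · rw [hg0 _ (hp h1)]; simp
      · rw [hf0 _ h1]; simp

lemma integral_gconv_eq_B (hδt : 0 < δt) (hΩtm : MeasurableSet Ωt) (hfin : volume Ωt ≠ ⊤)
    (hf : Nice Ωt f) (hg : Nice Ωt g) :
    ∫ x, f x * gconv n δt g x = B n δt f g := by
  have hint := integrable_B hδt hΩtm hfin hf hg
  have h1 : ∀ x, f x * gconv n δt g x = ∫ y, f x * gauss n δt (x - y) * g y := by
    intro x
    unfold gconv
    rw [← integral_const_mul]
    congr 1; ext y; ring
  simp_rw [h1]
  rw [B, Measure.volume_eq_prod]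
  exact integral_integral (f := fun x y => f x * gauss n δt (x - y) * g y)
    (by rw [Measure.volume_eq_prod] at hint; exact hint)

lemma B_sub_right (hδt : 0 < δt) (hΩtm : MeasurableSet Ωt) (hfin : volume Ωt ≠ ⊤)
    (hf : Nice Ωt f) (hg₁ : Nice Ωt g₁) (hg₂ : Nice Ωt g₂) :
    B n δt f (fun x => g₁ x - g₂ x) = B n δt f g₁ - B n δt f g₂ := by
  unfold B
  rw [← integral_sub (integrable_B hδt hΩtm hfin hf hg₁) (integrable_B hδt hΩtm hfin hf hg₂)]
  congr 1; ext p; ring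

lemma B_sub_left (hδt : 0 < δt) (hΩtm : MeasurableSet Ωt) (hfin : volume Ωt ≠ ⊤)
    (hf₁ : Nice Ωt f₁) (hf₂ : Nice Ωt f₂) (hg : Nice Ωt g) :
    B n δt (fun x => f₁ x - f₂ x) g = B n δt f₁ g - B n δt f₂ g := by
  unfold B
  rw [← integral_sub (integrable_B hδt hΩtm hfin hf₁ hg) (integrable_B hδt hΩtm hfin hf₂ hg)]
  congr 1; ext p; ring

lemma B_smul_right (c : ℝ) (f g : EuclideanSpace ℝ (Fin n) → ℝ) :
    B n δt f (fun x => c * g x) = c * B n δt f g := by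
  unfold B
  rw [← integral_const_mul]
  congr 1; ext p; ring

lemma B_comm (f g : EuclideanSpace ℝ (Fin n) → ℝ) :
    B n δt f g = B n δt g f := by
  unfold B
  rw [Measure.volume_eq_prod,
    ← integral_prod_swap (fun p : EuclideanSpace ℝ (Fin n) × EuclideanSpace ℝ (Fin n) =>
      f p.1 * gauss n δt (p.1 - p.2) * g p.2)]
  congr 1; ext p
  simp only [Prod.fst_swap, Prod.snd_swap]
  rw [gauss_symm]
  ring


lemma Nice.abs (hf : Nice Ωt f) : Nice Ωt (fun x => |f x|) := by
  obtain ⟨hm, ⟨C, hC⟩, h0⟩ := hf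
  exact ⟨hm.abs, ⟨C, fun x => by rw [abs_abs]; exact hC x⟩, fun x hx => by simp [h0 x hx]⟩

lemma B_nonneg (hδt : 0 < δt) (hΩtm : MeasurableSet Ωt) (hfin : volume Ωt ≠ ⊤)
    (hf : Nice Ωt f) : 0 ≤ B n δt f f := by
  have hs : 0 < δt / 2 := by linarith
  set s : ℝ := δt / 2 with hsdef
  obtain ⟨hfm, ⟨Cf, hCf⟩, hf0⟩ := id hf
  set k : EuclideanSpace ℝ (Fin n) → EuclideanSpace ℝ (Fin n) → ℝ :=
    fun x z => gauss n s (x - z) with hk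
  set H : (EuclideanSpace ℝ (Fin n) × EuclideanSpace ℝ (Fin n)) × EuclideanSpace ℝ (Fin n) → ℝ :=
    fun q => (f q.1.1 * k q.1.1 q.2) * (f q.1.2 * k q.1.2 q.2) with hH
  have hsemigroup : ∀ a b : EuclideanSpace ℝ (Fin n),
      ∫ z, k a z * k b z = gauss n δt (a - b) := by
    intro a b
    rw [hk]
    rw [gauss_conv hs a b]
    congr 1
    rw [hsdef]; ring
  have hHmeas : Measurable H := by
    apply Measurable.mul
    · exact (hfm.comp (measurable_fst.comp measurable_fst)).mul
        ((gauss_continuous s).measurable.comp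
          ((measurable_fst.comp measurable_fst).sub measurable_snd))
    · exact (hfm.comp (measurable_snd.comp measurable_fst)).mul
        ((gauss_continuous s).measurable.comp
          ((measurable_snd.comp measurable_fst).sub measurable_snd))
  have hM0 : (0:ℝ) ≤ (4 * Real.pi * s) ^ (-(n : ℝ) / 2) := Real.rpow_nonneg (by positivity) _
  -- integrability of H on ((E × E) × E)
  have hHint : Integrable H
      ((volume : Measure (EuclideanSpace ℝ (Fin n) × EuclideanSpace ℝ (Fin n))).prod volume) := by
    refine (integrable_prod_iff hHmeas.aestronglyMeasurable).2 ⟨?_, ?_⟩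
    · refine Filter.Eventually.of_forall fun p => ?_
      have hint2 : Integrable (fun z => (f p.1 * f p.2) *
          (k p.1 z * k p.2 z)) := by
        refine Integrable.const_mul ?_ _
        refine Integrable.mono' (g := fun z => (4 * Real.pi * s) ^ (-(n : ℝ) / 2) * k p.2 z)
          (((integrable_gauss hs).comp_sub_left p.2).const_mul _) ?_ ?_
        · exact (((gauss_continuous s).measurable.comp
            (measurable_const.sub measurable_id)).mul ((gauss_continuous s).measurable.comp
            (measurable_const.sub measurable_id))).aestronglyMeasurable
        · refine Filter.Eventually.of_forall fun z => ?_
          rw [Real.norm_eq_abs, abs_of_nonneg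
            (mul_nonneg (gauss_nonneg hs _) (gauss_nonneg hs _))]
          exact mul_le_mul_of_nonneg_right (gauss_le hs _) (gauss_nonneg hs _)
      exact hint2.congr (Filter.Eventually.of_forall fun z => by rw [hH]; ring)
    · have heq : (fun p : EuclideanSpace ℝ (Fin n) × EuclideanSpace ℝ (Fin n) =>
          ∫ z, ‖H (p, z)‖) = fun p => |f p.1| * gauss n δt (p.1 - p.2) * |f p.2| := by
        ext p
        have h3 : ∀ z, ‖H (p, z)‖ = (|f p.1| * |f p.2|) * (k p.1 z * k p.2 z) := by
          intro z
          rw [hH, Real.norm_eq_abs, abs_mul, abs_mul, abs_mul,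
            abs_of_nonneg (gauss_nonneg hs (p.1 - z)), abs_of_nonneg (gauss_nonneg hs (p.2 - z))]
          ring
        simp_rw [h3]
        rw [integral_const_mul, hsemigroup]
        ring
      rw [heq]
      exact integrable_B hδt hΩtm hfin hf.abs hf.abs
  -- now compute
  have step1 : B n δt f f = ∫ p : EuclideanSpace ℝ (Fin n) × EuclideanSpace ℝ (Fin n),
      ∫ z, H (p, z) := by
    unfold B
    congr 1; ext p
    rw [hH]
    simp only
    have : ∀ z, (f p.1 * k p.1 z) * (f p.2 * k p.2 z)
        = (f p.1 * f p.2) * (k p.1 z * k p.2 z) := fun z => by ring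
    simp_rw [this]
    rw [integral_const_mul, hsemigroup]
    ring
  have step2 : ∫ p : EuclideanSpace ℝ (Fin n) × EuclideanSpace ℝ (Fin n), ∫ z, H (p, z)
      = ∫ z, ∫ p : EuclideanSpace ℝ (Fin n) × EuclideanSpace ℝ (Fin n), H (p, z) := by
    exact integral_integral_swap (f := fun p z => H (p, z)) hHint
  have step3 : ∀ z, ∫ p : EuclideanSpace ℝ (Fin n) × EuclideanSpace ℝ (Fin n), H (p, z)
      = (∫ x, f x * k x z) ^ 2 := by
    intro z
    rw [Measure.volume_eq_prod]
    have := integral_prod_mul (μ := (volume : Measure (EuclideanSpace ℝ (Fin n))))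
      (ν := (volume : Measure (EuclideanSpace ℝ (Fin n))))
      (f := fun x => f x * k x z) (g := fun x => f x * k x z)
    rw [sq, ← this]
  rw [step1, step2]
  refine integral_nonneg fun z => ?_
  rw [step3 z]
  exact sq_nonneg _


lemma nice_chi {A : Set (EuclideanSpace ℝ (Fin n))} (hA : MeasurableSet A) (hsub : A ⊆ Ωt) :
    Nice Ωt (chi n A) := by
  refine ⟨measurable_const.indicator hA, ⟨1, fun x => ?_⟩, fun x hx => ?_⟩
  · unfold chi
    by_cases hx : x ∈ A <;> simp [hx]
  · unfold chi
    rw [indicator_of_notMem (fun h => hx (hsub h))]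

lemma Nice.sub {f g : EuclideanSpace ℝ (Fin n) → ℝ} (hf : Nice Ωt f) (hg : Nice Ωt g) :
    Nice Ωt (fun x => f x - g x) := by
  obtain ⟨hfm, ⟨Cf, hCf⟩, hf0⟩ := hf
  obtain ⟨hgm, ⟨Cg, hCg⟩, hg0⟩ := hg
  refine ⟨hfm.sub hgm, ⟨Cf + Cg, fun x => ?_⟩, fun x hx => by simp only [hf0 x hx, hg0 x hx]; ring⟩
  exact le_trans (abs_sub _ _) (add_le_add (hCf x) (hCg x))

lemma Nice.const_mul {f : EuclideanSpace ℝ (Fin n) → ℝ} (hf : Nice Ωt f) (c : ℝ) :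
    Nice Ωt (fun x => c * f x) := by
  obtain ⟨hfm, ⟨Cf, hCf⟩, hf0⟩ := hf
  refine ⟨hfm.const_mul c, ⟨|c| * Cf, fun x => ?_⟩, fun x hx => by simp only [hf0 x hx]; ring⟩
  rw [abs_mul]
  exact mul_le_mul_of_nonneg_left (hCf x) (abs_nonneg c)

end TwoPhaseAux

open TwoPhaseAux in
/-- exact expansion of the two-phase energy `Ẽ(u) = E^{δt}(u, χ_Ω − u)`
around `v`, with nonpositive exact second-order term. -/
theorem two_phase_energy_expansion (n : ℕ) (hn : 1 ≤ n)
    (Ωt Ω : Set (EuclideanSpace ℝ (Fin n)))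
    (hΩtb : Bornology.IsBounded Ωt) (hΩtm : MeasurableSet Ωt)
    (hΩ : Ω ⊆ Ωt) (hΩm : MeasurableSet Ω)
    (γLV γSL γSV δt θY : ℝ)
    (hγLV : 0 < γLV) (hγSL : 0 < γSL) (hγSV : 0 < γSV) (hδt : 0 < δt)
    (hYoung : γLV * Real.cos θY = γSV - γSL)
    (Etil : (EuclideanSpace ℝ (Fin n) → ℝ) → ℝ)
    (hEtil : Etil = fun u =>
      Efun n δt γLV γSL γSV (Ωt \ Ω) u (fun x => chi n Ω x - u x))
    (u v : EuclideanSpace ℝ (Fin n) → ℝ)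
    (hmu : Measurable u) (hmv : Measurable v)
    (hbu : ∃ C, ∀ x, |u x| ≤ C) (hbv : ∃ C, ∀ x, |v x| ≤ C)
    (h01u : ∀ x, 0 ≤ u x ∧ u x ≤ 1) (h01v : ∀ x, 0 ≤ v x ∧ v x ≤ 1)
    (h0u : ∀ x, x ∉ Ω → u x = 0) (h0v : ∀ x, x ∉ Ω → v x = 0) :
    Etil u - Etil v
      = (γLV / Real.sqrt δt) *
          (∫ x, (u x - v x) *
            gconv n δt (fun y => chi n Ω y - 2 * v y - Real.cos θY * chi n (Ωt \ Ω) y) x)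
        - (γLV / Real.sqrt δt) *
            ∫ x, (u x - v x) * gconv n δt (fun y => u y - v y) x ∧
    Etil u ≤ Etil v
      + (γLV / Real.sqrt δt) *
          ∫ x, (u x - v x) *
            gconv n δt (fun y => chi n Ω y - 2 * v y - Real.cos θY * chi n (Ωt \ Ω) y) x := by
  subst hEtil
  have hfin : volume Ωt ≠ ⊤ := hΩtb.measure_lt_top.ne
  have hD : MeasurableSet (Ωt \ Ω) := hΩtm.diff hΩm
  have nu : Nice Ωt u := ⟨hmu, hbu, fun x hx => h0u x fun h => hx (hΩ h)⟩
  have nv : Nice Ωt v := ⟨hmv, hbv, fun x hx => h0v x fun h => hx (hΩ h)⟩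
  have nO : Nice Ωt (chi n Ω) := nice_chi hΩm hΩ
  have nD : Nice Ωt (chi n (Ωt \ Ω)) := nice_chi hD diff_subset
  have nXu : Nice Ωt (fun x => chi n Ω x - u x) := nO.sub nu
  have nXv : Nice Ωt (fun x => chi n Ω x - v x) := nO.sub nv
  have n2v : Nice Ωt (fun x => 2 * v x) := nv.const_mul 2
  have nO2v : Nice Ωt (fun x => chi n Ω x - 2 * v x) := nO.sub n2v
  have ncD : Nice Ωt (fun x => Real.cos θY * chi n (Ωt \ Ω) x) := nD.const_mul _
  have ng0 : Nice Ωt (fun x => chi n Ω x - 2 * v x - Real.cos θY * chi n (Ωt \ Ω) x) :=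
    nO2v.sub ncD
  have nw : Nice Ωt (fun x => u x - v x) := nu.sub nv
  have e1 : (∫ x, u x * gconv n δt (fun x => chi n Ω x - u x) x)
      = B n δt u (chi n Ω) - B n δt u u := by
    rw [integral_gconv_eq_B hδt hΩtm hfin nu nXu, B_sub_right hδt hΩtm hfin nu nO nu]
  have e2 : (∫ x, u x * gconv n δt (chi n (Ωt \ Ω)) x) = B n δt u (chi n (Ωt \ Ω)) :=
    integral_gconv_eq_B hδt hΩtm hfin nu nD
  have e3 : (∫ x, (chi n Ω x - u x) * gconv n δt (chi n (Ωt \ Ω)) x)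
      = B n δt (chi n Ω) (chi n (Ωt \ Ω)) - B n δt u (chi n (Ωt \ Ω)) := by
    rw [integral_gconv_eq_B hδt hΩtm hfin nXu nD, B_sub_left hδt hΩtm hfin nO nu nD]
  have e4 : (∫ x, v x * gconv n δt (fun x => chi n Ω x - v x) x)
      = B n δt v (chi n Ω) - B n δt v v := by
    rw [integral_gconv_eq_B hδt hΩtm hfin nv nXv, B_sub_right hδt hΩtm hfin nv nO nv]
  have e5 : (∫ x, v x * gconv n δt (chi n (Ωt \ Ω)) x) = B n δt v (chi n (Ωt \ Ω)) :=
    integral_gconv_eq_B hδt hΩtm hfin nv nD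
  have e6 : (∫ x, (chi n Ω x - v x) * gconv n δt (chi n (Ωt \ Ω)) x)
      = B n δt (chi n Ω) (chi n (Ωt \ Ω)) - B n δt v (chi n (Ωt \ Ω)) := by
    rw [integral_gconv_eq_B hδt hΩtm hfin nXv nD, B_sub_left hδt hΩtm hfin nO nv nD]
  have e7 : (∫ x, (u x - v x) *
        gconv n δt (fun y => chi n Ω y - 2 * v y - Real.cos θY * chi n (Ωt \ Ω) y) x)
      = ((B n δt u (chi n Ω) - B n δt v (chi n Ω))
          - 2 * (B n δt u v - B n δt v v))
        - Real.cos θY * (B n δt u (chi n (Ωt \ Ω)) - B n δt v (chi n (Ωt \ Ω))) := by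
    rw [integral_gconv_eq_B hδt hΩtm hfin nw ng0,
      B_sub_right hδt hΩtm hfin nw nO2v ncD,
      B_sub_right hδt hΩtm hfin nw nO n2v,
      B_smul_right (Real.cos θY) (fun x => u x - v x) (chi n (Ωt \ Ω)),
      B_smul_right 2 (fun x => u x - v x) v,
      B_sub_left hδt hΩtm hfin nu nv nO,
      B_sub_left hδt hΩtm hfin nu nv nv,
      B_sub_left hδt hΩtm hfin nu nv nD]
  have e8 : (∫ x, (u x - v x) * gconv n δt (fun y => u y - v y) x)
      = (B n δt u u - B n δt u v) - (B n δt u v - B n δt v v) := by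
    rw [integral_gconv_eq_B hδt hΩtm hfin nw nw,
      B_sub_right hδt hΩtm hfin nw nu nv,
      B_sub_left hδt hΩtm hfin nu nv nu,
      B_sub_left hδt hΩtm hfin nu nv nv,
      B_comm v u]
  have hI2 : 0 ≤ ∫ x, (u x - v x) * gconv n δt (fun y => u y - v y) x := by
    rw [integral_gconv_eq_B hδt hΩtm hfin nw nw]
    exact B_nonneg hδt hΩtm hfin nw
  have hsq : 0 < Real.sqrt δt := Real.sqrt_pos.mpr hδt
  have EQ : Efun n δt γLV γSL γSV (Ωt \ Ω) u (fun x => chi n Ω x - u x)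
        - Efun n δt γLV γSL γSV (Ωt \ Ω) v (fun x => chi n Ω x - v x)
      = (γLV / Real.sqrt δt) *
          (∫ x, (u x - v x) *
            gconv n δt (fun y => chi n Ω y - 2 * v y - Real.cos θY * chi n (Ωt \ Ω) y) x)
        - (γLV / Real.sqrt δt) *
            ∫ x, (u x - v x) * gconv n δt (fun y => u y - v y) x := by
    simp only [Efun]
    rw [e1, e2, e3, e4, e5, e6, e7, e8]
    linear_combination ((B n δt u (chi n (Ωt \ Ω)) - B n δt v (chi n (Ωt \ Ω)))
      / Real.sqrt δt) * hYoung
  refine ⟨EQ, ?_⟩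
  have h2 : 0 ≤ (γLV / Real.sqrt δt) *
      ∫ x, (u x - v x) * gconv n δt (fun y => u y - v y) x :=
    mul_nonneg (div_nonneg hγLV.le hsq.le) hI2
  linarith [EQ, h2]
end
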